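/- (Properties of the active set cleanup step ASC.) Let n ∈ ℕ, let T ⊆ ℝ^n be a finite set, let β : T → ℝ satisfy β_s > 0 for all s ∈ T and Σ_{s∈T} β_s = 1, let D ⊆ T with |D| ≤ 1, and let N ∈ ℝ^{(n+2)×(n+2)} satisfy: (1) N is invertible, every entry of row n+1 of N is ≥ 0, and every entry of row n+2 of N is ≥ 1; (2) for every i ∈ [n+2], if N_{n+1,i} = 0 then there exists s ∈ T\D with s̃ = N_{:,i}; (3) for every s ∈ T\D there exists i ∈ [n+2] with N_{:,i} = s̃. Define λ ∈ ℝ^{n+2}, Q ∈ ℝ^{(n+2)×(n+2)}, M ∈ ℝ^{(n+2)×(n+2)}, α : ℝ^n → ℝ and S as in the ASC procedure of the context (for any admissible choices of k and ℓ). Then: (0) if D = {v}, the vector r = −N^{−1}ṽ has at least one strictly negative entry, so k exists; (4) M is invertible, every entry of row n+1 of M is ≥ 0, and every entry of row n+2 of M is ≥ 1; (5) for every i ∈ [n+2], if λ_i > 0 then there exists s ∈ S ∩ T with s̃ = M_{:,i} = Q_{:,i}; (6) Σ_{s∈T} β_s·s = Σ_{s∈S} α_s·s; (7) for every i ∈ [n+2],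 if M_{n+1,i} = 0 then there exists s ∈ S with s̃ = M_{:,i}; (8) for every s ∈ S there exists i ∈ [n+2] with M_{:,i} = s̃; (9) S ⊆ T and |S| ≤ n+1. -/

import Mathlib

open Classical

/-- For `x ∈ ℝ^n`, `x̃ = (x₁, …, xₙ, 0, 1) ∈ ℝ^{n+2}`. -/
def tilde {n : ℕ} (x : Fin n → ℝ) : Fin (n + 2) → ℝ :=
  Fin.snoc (Fin.snoc x 0) 1

lemma tilde_p {n : ℕ} (x : Fin n → ℝ) (h : n < n + 2) : tilde x ⟨n, h⟩ = 0 := by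
  simp [tilde, Fin.snoc]

lemma tilde_q {n : ℕ} (x : Fin n → ℝ) (h : n + 1 < n + 2) : tilde x ⟨n + 1, h⟩ = 1 := by
  simp [tilde, Fin.snoc]

lemma tilde_inj {n : ℕ} : Function.Injective (tilde (n := n)) := by
  intro x y h
  funext j
  have := congrFun h (j.castSucc.castSucc)
  simpa [tilde] using this

lemma col_inj {m : ℕ} (A : Matrix (Fin m) (Fin m) ℝ) (h : IsUnit A.det) :
    ∀ i i', (fun j => A j i) = (fun j => A j i') → i = i' := by
  intro i i' hcol
  by_contra hne
  have h1 : A⁻¹ * A = 1 := Matrix.nonsing_inv_mul A h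
  have e1 : (A⁻¹ * A) i' i' = 1 := by rw [h1]; simp
  have e2 : (A⁻¹ * A) i' i = 0 := by rw [h1]; simp [Matrix.one_apply, hne, (Ne.symm hne)]
  rw [Matrix.mul_apply] at e1 e2
  have : ∑ x, A⁻¹ i' x * A x i = ∑ x, A⁻¹ i' x * A x i' := by
    apply Finset.sum_congr rfl; intro x _; rw [congrFun hcol x]
  rw [this, e1] at e2
  exact one_ne_zero e2

lemma helper_sum {n m : ℕ} (T' : Finset (Fin n → ℝ))
    (β : (Fin n → ℝ) → ℝ) (A : Fin m → (Fin (n + 2) → ℝ))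
    (hAinj : ∀ i i', A i = A i' → i = i')
    (γ : Fin m → ℝ)
    (hex : ∀ s ∈ T', ∃ i, A i = tilde s)
    (hγ1 : ∀ i, ∀ s ∈ T', A i = tilde s → γ i = β s)
    (hγ0 : ∀ i, (∀ s ∈ T', A i ≠ tilde s) → γ i = 0)
    (J : Fin (n + 2)) :
    ∑ s ∈ T', β s * tilde s J = ∑ i, γ i * A i J := by
  classical
  set I : Finset (Fin m) := Finset.univ.filter (fun i => ∃ s ∈ T', A i = tilde s) with hI
  have h1 : ∑ i, γ i * A i J = ∑ i ∈ I, γ i * A i J := by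
    rw [hI]
    refine (Finset.sum_filter_of_ne ?_).symm
    intro i _ hne
    by_contra hnot
    push_neg at hnot
    exact hne (by rw [hγ0 i hnot, zero_mul])
  rw [h1]
  refine Finset.sum_bij' (fun s hs => (hex s hs).choose) (fun i hi => ?_) ?_ ?_ ?_ ?_ ?_
  · exact (Finset.mem_filter.mp hi).2.choose
  · intro s hs
    simp only [hI, Finset.mem_filter, Finset.mem_univ, true_and]
    exact ⟨s, hs, (hex s hs).choose_spec⟩
  · intro i hi
    exact (Finset.mem_filter.mp hi).2.choose_spec.1
  · intro s hs
    have h2 := (hex s hs).choose_spec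
    have h3 := (Finset.mem_filter.mp ((by
      simp only [hI, Finset.mem_filter, Finset.mem_univ, true_and]
      exact ⟨s, hs, h2⟩ : (hex s hs).choose ∈ I))).2.choose_spec.2
    exact tilde_inj (h3.symm.trans h2)
  · intro i hi
    have h2 := (Finset.mem_filter.mp hi).2.choose_spec
    exact hAinj _ _ ((hex _ h2.1).choose_spec.trans h2.2.symm)
  · intro s hs
    have h2 := (hex s hs).choose_spec
    rw [hγ1 _ s hs h2, h2]

lemma unit_colop {m : ℕ} (c : Fin m → ℝ) (ℓ : Fin m) (hcℓ : c ℓ = 0) :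
    (Matrix.of fun x i => (if x = i then (1:ℝ) else 0) + c i * (if x = ℓ then 1 else 0)) *
      (Matrix.of fun x i => (if x = i then (1:ℝ) else 0) - c i * (if x = ℓ then 1 else 0)) =
      1 := by
  ext a b
  rw [Matrix.mul_apply]
  have hterm : ∀ x : Fin m,
      (Matrix.of fun x i => (if x = i then (1:ℝ) else 0) + c i * (if x = ℓ then 1 else 0)) a x *
      (Matrix.of fun x i => (if x = i then (1:ℝ) else 0) - c i * (if x = ℓ then 1 else 0)) x b
      = ((if a = x then (if x = b then (1:ℝ) else 0) else 0)
          - (if a = x then c b * (if x = ℓ then 1 else 0) else 0))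
        + ((if x = b then c x * (if a = ℓ then 1 else 0) else 0)
          - (if x = ℓ then c x * ((if a = ℓ then 1 else 0) * c b) else 0)) := by
    intro x
    simp only [Matrix.of_apply]
    by_cases h1 : a = x <;> by_cases h2 : x = b <;> by_cases h3 : x = ℓ <;>
      simp [h1, h2, h3, hcℓ] <;> split_ifs <;> simp_all
  rw [Finset.sum_congr rfl (fun x _ => hterm x), Finset.sum_add_distrib,
    Finset.sum_sub_distrib, Finset.sum_sub_distrib]
  rw [Finset.sum_ite_eq, Finset.sum_ite_eq, Finset.sum_ite_eq', Finset.sum_ite_eq']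
  simp [Matrix.one_apply, hcℓ]

/-- Properties of the active set cleanup step (ASC). -/
theorem asc_properties (n : ℕ)
    (T : Set (Fin n → ℝ)) (hTfin : T.Finite)
    (β : (Fin n → ℝ) → ℝ)
    (hβpos : ∀ s ∈ T, 0 < β s)
    (hβsum : ∑ᶠ s ∈ T, β s = 1)
    (D : Set (Fin n → ℝ)) (hDT : D ⊆ T) (hDcard : D.Subsingleton)
    (N : Matrix (Fin (n + 2)) (Fin (n + 2)) ℝ)
    -- assumption (1)
    (hNinv : IsUnit N.det)
    (hNrow1 : ∀ i, 0 ≤ N ⟨n, by omega⟩ i)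
    (hNrow2 : ∀ i, 1 ≤ N ⟨n + 1, by omega⟩ i)
    -- assumption (2)
    (hN0 : ∀ i, N ⟨n, by omega⟩ i = 0 → ∃ s ∈ T \ D, tilde s = fun j => N j i)
    -- assumption (3)
    (hTN : ∀ s ∈ T \ D, ∃ i, (fun j => N j i) = tilde s)
    -- the data produced by the ASC procedure
    (lam : Fin (n + 2) → ℝ) (Q M : Matrix (Fin (n + 2)) (Fin (n + 2)) ℝ)
    (α : (Fin n → ℝ) → ℝ) (S : Set (Fin n → ℝ))
    -- case distinction of the ASC procedure
    (hbranch :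
      (D = ∅ ∧
        (∀ i, ∀ s ∈ T, (fun j => N j i) = tilde s → lam i = β s) ∧
        (∀ i, (∀ s ∈ T, (fun j => N j i) ≠ tilde s) → lam i = 0) ∧
        Q = N) ∨
      (∃ v, D = {v} ∧
        ∃ (μ : Fin (n + 3) → ℝ) (r : Fin (n + 2) → ℝ) (k : Fin (n + 2)) (θ : ℝ),
          (∀ i : Fin (n + 2), ∀ s ∈ T,
            (fun j => N j i) = tilde s → μ i.castSucc = β s) ∧
          (∀ i : Fin (n + 2),
            (∀ s ∈ T, (fun j => N j i) ≠ tilde s) → μ i.castSucc = 0) ∧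
          μ (Fin.last (n + 2)) = β v ∧
          r = -(N⁻¹).mulVec (tilde v) ∧
          r k < 0 ∧
          (∀ i, r i < 0 → -μ k.castSucc / r k ≤ -μ i.castSucc / r i) ∧
          θ = -μ k.castSucc / r k ∧
          lam k = β v + θ ∧
          (∀ i, i ≠ k → lam i = μ i.castSucc + θ * r i) ∧
          (∀ j i, Q j i = if i = k then tilde v j else N j i)))
    -- choice of ℓ and construction of M, α, S
    (ℓ : Fin (n + 2)) (hℓ : Q ⟨n, by omega⟩ ℓ ≠ 0)
    (hM : ∀ j i, M j i =
      if lam i = 0 ∧ Q ⟨n, by omega⟩ i = 0 then Q j i + Q j ℓ else Q j i)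
    (hα1 : ∀ s, ∀ i, (fun j => M j i) = tilde s → α s = lam i)
    (hα0 : ∀ s, (∀ i, (fun j => M j i) ≠ tilde s) → α s = 0)
    (hS : S = {s | 0 < α s}) :
    -- conclusion (0): the ratio test is well defined
    (∀ v, D = {v} → ∃ i, (-(N⁻¹).mulVec (tilde v)) i < 0) ∧
    -- conclusion (4)
    (IsUnit M.det ∧ (∀ i, 0 ≤ M ⟨n, by omega⟩ i) ∧
      (∀ i, 1 ≤ M ⟨n + 1, by omega⟩ i)) ∧
    -- conclusion (5)
    (∀ i, 0 < lam i → ∃ s ∈ S ∩ T,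
      tilde s = (fun j => M j i) ∧ (∀ j, M j i = Q j i)) ∧
    -- conclusion (6)
    (∑ᶠ s ∈ T, β s • s) = (∑ᶠ s ∈ S, α s • s) ∧
    -- conclusion (7)
    (∀ i, M ⟨n, by omega⟩ i = 0 → ∃ s ∈ S, tilde s = fun j => M j i) ∧
    -- conclusion (8)
    (∀ s ∈ S, ∃ i, (fun j => M j i) = tilde s) ∧
    -- conclusion (9)
    (S ⊆ T ∧ S.Finite ∧ S.ncard ≤ n + 1) := by
  classical
  -- conclusion (0)
  have c0 : ∀ v, D = {v} → ∃ i, (-(N⁻¹).mulVec (tilde v)) i < 0 := by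
    intro v hv
    by_contra hnot
    push_neg at hnot
    have hNN : N.mulVec ((N⁻¹).mulVec (tilde v)) = tilde v := by
      rw [Matrix.mulVec_mulVec, Matrix.mul_nonsing_inv N hNinv, Matrix.one_mulVec]
    have h1 : ∑ i, N ⟨n + 1, by omega⟩ i * ((N⁻¹).mulVec (tilde v)) i = 1 := by
      have := congrFun hNN ⟨n + 1, by omega⟩
      rw [tilde_q] at this
      simpa [Matrix.mulVec, dotProduct] using this
    have h2 : ∀ i : Fin (n + 2), N ⟨n + 1, by omega⟩ i * ((N⁻¹).mulVec (tilde v)) i ≤ 0 := by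
      intro i
      have ha := hnot i
      rw [Pi.neg_apply, neg_nonneg] at ha
      exact mul_nonpos_of_nonneg_of_nonpos (le_trans zero_le_one (hNrow2 i)) ha
    have : (1 : ℝ) ≤ 0 := h1 ▸ Finset.sum_nonpos (fun i _ => h2 i)
    linarith
  -- the bundle of facts about (lam, Q) common to both branches
  obtain ⟨hQinv, hQrow1, hQrow2, hlamnn, hsum, hQ0⟩ :
      IsUnit Q.det ∧ (∀ i, 0 ≤ Q ⟨n, by omega⟩ i) ∧ (∀ i, 1 ≤ Q ⟨n + 1, by omega⟩ i) ∧
      (∀ i, 0 ≤ lam i) ∧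
      (∀ J, ∑ s ∈ hTfin.toFinset, β s * tilde s J = ∑ i, lam i * Q J i) ∧
      (∀ i, Q ⟨n, by omega⟩ i = 0 → ∃ s ∈ T, tilde s = fun j => Q j i) := by
    rcases hbranch with ⟨hD, hlam1, hlam0, hQN⟩ |
      ⟨v, hDv, μ, r, k, θ, hμ1, hμ0, hμlast, hr, hrk, hratio, hθ, hlamk, hlami, hQdef⟩
    · subst hQN
      refine ⟨hNinv, hNrow1, hNrow2, ?_, ?_, ?_⟩
      · intro i
        by_cases h : ∃ s ∈ T, (fun j => Q j i) = tilde s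
        · obtain ⟨s, hs, he⟩ := h
          rw [hlam1 i s hs he]; exact (hβpos s hs).le
        · push_neg at h
          rw [hlam0 i h]
      · intro J
        refine helper_sum hTfin.toFinset β (fun i j => Q j i) (col_inj Q hNinv) lam ?_ ?_ ?_ J
        · intro s hs
          exact hTN s ⟨hTfin.mem_toFinset.mp hs, by rw [hD]; exact not_false⟩
        · intro i s hs he
          exact hlam1 i s (hTfin.mem_toFinset.mp hs) he
        · intro i h
          exact hlam0 i (fun s hs => h s (hTfin.mem_toFinset.mpr hs))
      · intro i h
        obtain ⟨s, hsTD, hts⟩ := hN0 i h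
        exact ⟨s, hsTD.1, hts⟩
    · have hvT : v ∈ T := hDT (hDv ▸ rfl)
      have hrkne : r k ≠ 0 := ne_of_lt hrk
      have hNr : N.mulVec r = -(tilde v) := by
        rw [hr, Matrix.mulVec_neg, Matrix.mulVec_mulVec, Matrix.mul_nonsing_inv N hNinv,
          Matrix.one_mulVec]
      have hμnn : ∀ i : Fin (n + 2), 0 ≤ μ i.castSucc := by
        intro i
        by_cases h : ∃ s ∈ T, (fun j => N j i) = tilde s
        · obtain ⟨s, hs, he⟩ := h
          rw [hμ1 i s hs he]; exact (hβpos s hs).le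
        · push_neg at h
          rw [hμ0 i h]
      have hθnn : 0 ≤ θ := by
        rw [hθ, div_nonneg_iff]
        right
        exact ⟨neg_nonpos.mpr (hμnn k), hrk.le⟩
      have hcancel : μ k.castSucc + θ * r k = 0 := by
        rw [hθ, div_mul_cancel₀ _ hrkne]; ring
      have notanV : ∀ i, (fun j => N j i) ≠ tilde v := by
        intro i he
        have hp0 : N ⟨n, by omega⟩ i = 0 := by
          rw [congrFun he ⟨n, by omega⟩, tilde_p]
        obtain ⟨s, hsTD, hts⟩ := hN0 i hp0
        have : s = v := tilde_inj (hts.trans he)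
        rw [hDv] at hsTD
        exact hsTD.2 (by rw [this]; rfl)
      refine ⟨?_, ?_, ?_, ?_, ?_, ?_⟩
      · -- IsUnit Q.det
        set P : Matrix (Fin (n + 2)) (Fin (n + 2)) ℝ :=
          Matrix.updateCol 1 k (fun j => -r j) with hP
        have hQP : Q = N * P := by
          ext j i
          rw [Matrix.mul_apply, hQdef]
          by_cases hik : i = k
          · subst hik
            rw [if_pos rfl]
            have h1 : ∀ x, N j x * P x i = -(N j x * r x) := by
              intro x; rw [hP, Matrix.updateCol_apply, if_pos rfl]; ring
            rw [Finset.sum_congr rfl (fun x _ => h1 x), Finset.sum_neg_distrib]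
            have := congrFun hNr j
            simp only [Matrix.mulVec, dotProduct, Pi.neg_apply] at this
            rw [this]; ring
          · rw [if_neg hik]
            have h1 : ∀ x, N j x * P x i = N j x * (if x = i then 1 else 0) := by
              intro x; rw [hP, Matrix.updateCol_apply, if_neg hik, Matrix.one_apply]
            rw [Finset.sum_congr rfl (fun x _ => h1 x)]
            simp [Finset.sum_ite_eq']
        have hPdet : P.det = -r k := by
          rw [hP, ← Matrix.cramer_apply]
          rw [Matrix.cramer_one]
          rfl
        rw [hQP, Matrix.det_mul, hPdet]
        refine isUnit_iff_ne_zero.mpr (mul_ne_zero hNinv.ne_zero ?_)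
        intro h; apply hrkne; linarith
      · intro i
        rw [hQdef]
        split
        · rw [tilde_p]
        · exact hNrow1 i
      · intro i
        rw [hQdef]
        split
        · rw [tilde_q]
        · exact hNrow2 i
      · -- lam nonneg
        intro i
        by_cases hik : i = k
        · subst hik
          rw [hlamk]
          have := hβpos v hvT
          linarith
        · rw [hlami i hik]
          by_cases hri : r i < 0
          · have h := hratio i hri
            rw [← hθ] at h
            have h2 : (-μ i.castSucc / r i) * r i = -μ i.castSucc :=
              div_mul_cancel₀ _ (ne_of_lt hri)
            have h3 := mul_le_mul_of_nonpos_right h hri.le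
            rw [h2] at h3
            linarith
          · push_neg at hri
            exact add_nonneg (hμnn i) (mul_nonneg hθnn hri)
      · -- the sum identity
        intro J
        have hvTf : v ∈ hTfin.toFinset := hTfin.mem_toFinset.mpr hvT
        have key := helper_sum (hTfin.toFinset.erase v) β (fun i j => N j i)
          (col_inj N hNinv) (fun i => μ i.castSucc) ?_ ?_ ?_ J
        · have hTsplit : ∑ s ∈ hTfin.toFinset, β s * tilde s J =
              ∑ s ∈ hTfin.toFinset.erase v, β s * tilde s J + β v * tilde v J :=
            (Finset.sum_erase_add _ _ hvTf).symm
          rw [hTsplit, key]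
          -- now show ∑ i, μ i * N J i + β v * tilde v J = ∑ i, lam i * Q J i
          have hNrJ : ∑ i, N J i * r i = -(tilde v J) := by
            have := congrFun hNr J
            simpa [Matrix.mulVec, dotProduct] using this
          have h1 : ∀ i ∈ Finset.univ.erase k,
              lam i * Q J i = μ i.castSucc * N J i + θ * (N J i * r i) := by
            intro i hi
            have hik := Finset.ne_of_mem_erase hi
            rw [hlami i hik, hQdef J i, if_neg hik]; ring
          have h2 : ∑ i ∈ Finset.univ.erase k, lam i * Q J i =
              ∑ i ∈ Finset.univ.erase k, μ i.castSucc * N J i +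
              θ * ∑ i ∈ Finset.univ.erase k, N J i * r i := by
            rw [Finset.sum_congr rfl h1, Finset.sum_add_distrib, Finset.mul_sum]
          have h3 : ∑ i ∈ Finset.univ.erase k, μ i.castSucc * N J i =
              ∑ i, μ i.castSucc * N J i - μ k.castSucc * N J k :=
            Finset.sum_erase_eq_sub (Finset.mem_univ k)
          have h4 : ∑ i ∈ Finset.univ.erase k, N J i * r i =
              -(tilde v J) - N J k * r k := by
            rw [Finset.sum_erase_eq_sub (Finset.mem_univ k), hNrJ]
          have h5 : ∑ i, lam i * Q J i =
              ∑ i ∈ Finset.univ.erase k, lam i * Q J i + lam k * Q J k :=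
            (Finset.sum_erase_add _ _ (Finset.mem_univ k)).symm
          have h6 : lam k * Q J k = (β v + θ) * tilde v J := by
            rw [hlamk, hQdef, if_pos rfl]
          rw [h5, h2, h3, h4, h6]
          linear_combination (N J k) * hcancel
        · intro s hs
          rw [Finset.mem_erase, hTfin.mem_toFinset] at hs
          exact hTN s ⟨hs.2, by rw [hDv]; exact hs.1⟩
        · intro i s hs he
          rw [Finset.mem_erase, hTfin.mem_toFinset] at hs
          exact hμ1 i s hs.2 he
        · intro i h
          refine hμ0 i (fun s hs he => ?_)
          by_cases hsv : s = v
          · exact notanV i (hsv ▸ he)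
          · exact h s (Finset.mem_erase.mpr ⟨hsv, hTfin.mem_toFinset.mpr hs⟩) he
      · -- hQ0
        intro i h
        by_cases hik : i = k
        · subst hik
          exact ⟨v, hvT, funext fun j => (hQdef j _ ▸ (if_pos rfl).symm : _)⟩
        · rw [hQdef, if_neg hik] at h
          obtain ⟨s, hsTD, hts⟩ := hN0 i h
          refine ⟨s, hsTD.1, funext fun j => ?_⟩
          rw [hQdef j i, if_neg hik]
          exact congrFun hts j
  -- key fact: lam i * Q(n) i = 0
  have key0 : ∀ i, lam i * Q ⟨n, by omega⟩ i = 0 := by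
    have h0 := hsum ⟨n, by omega⟩
    have hL : ∑ s ∈ hTfin.toFinset, β s * tilde s ⟨n, by omega⟩ = 0 :=
      Finset.sum_eq_zero (fun s _ => by rw [tilde_p, mul_zero])
    rw [hL] at h0
    have hz := (Finset.sum_eq_zero_iff_of_nonneg
      (fun i _ => mul_nonneg (hlamnn i) (hQrow1 i))).mp h0.symm
    exact fun i => hz i (Finset.mem_univ i)
  have hQcolpos : ∀ i, 0 < lam i → ∃ s ∈ T, tilde s = fun j => Q j i := by
    intro i hi
    refine hQ0 i ?_
    rcases mul_eq_zero.mp (key0 i) with h | h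
    · exact absurd h (ne_of_gt hi)
    · exact h
  have hcondℓ : ¬(lam ℓ = 0 ∧ Q ⟨n, by omega⟩ ℓ = 0) := fun h => hℓ h.2
  have hMQcol : ∀ i, ¬(lam i = 0 ∧ Q ⟨n, by omega⟩ i = 0) → ∀ j, M j i = Q j i :=
    fun i h j => by rw [hM j i, if_neg h]
  -- conclusion (4)
  have hMdet : IsUnit M.det := by
    set c : Fin (n + 2) → ℝ :=
      fun i => if lam i = 0 ∧ Q ⟨n, by omega⟩ i = 0 then 1 else 0 with hc
    have hcℓ : c ℓ = 0 := by rw [hc]; exact if_neg hcondℓ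
    have hME : M = Q * (Matrix.of fun x i =>
        (if x = i then (1:ℝ) else 0) + c i * (if x = ℓ then 1 else 0)) := by
      ext j i
      rw [Matrix.mul_apply, hM]
      have h1 : ∀ x, Q j x * ((if x = i then (1:ℝ) else 0) + c i * (if x = ℓ then 1 else 0))
          = (if x = i then Q j x else 0) + c i * (if x = ℓ then Q j x else 0) := by
        intro x
        split_ifs <;> ring
      simp only [Matrix.of_apply]
      rw [Finset.sum_congr rfl (fun x _ => h1 x), Finset.sum_add_distrib,
        Finset.sum_ite_eq', ← Finset.mul_sum, Finset.sum_ite_eq']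
      simp only [Finset.mem_univ, if_true]
      rw [hc]
      by_cases hcnd : (lam i = 0 ∧ Q ⟨n, by omega⟩ i = 0) <;> simp [hcnd]
    rw [hME, Matrix.det_mul]
    exact hQinv.mul (Matrix.isUnit_det_of_right_inverse (unit_colop c ℓ hcℓ))
  have hMcolinj := col_inj M hMdet
  have hMrow1 : ∀ i, 0 ≤ M ⟨n, by omega⟩ i := by
    intro i
    rw [hM]
    split
    · next h => rw [h.2, zero_add]; exact hQrow1 ℓ
    · exact hQrow1 i
  have hMrow2 : ∀ i, 1 ≤ M ⟨n + 1, by omega⟩ i := by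
    intro i
    rw [hM]
    split
    · have := hQrow2 i; have := hQrow2 ℓ; linarith
    · exact hQrow2 i
  -- conclusion (5)
  have c5 : ∀ i, 0 < lam i → ∃ s ∈ S ∩ T,
      tilde s = (fun j => M j i) ∧ (∀ j, M j i = Q j i) := by
    intro i hi
    have hnc : ¬(lam i = 0 ∧ Q ⟨n, by omega⟩ i = 0) := fun h => (ne_of_gt hi) h.1
    obtain ⟨s, hsT, hts⟩ := hQcolpos i hi
    have hMc : ∀ j, M j i = Q j i := hMQcol i hnc
    have hMci : (fun j => M j i) = tilde s := by
      funext j; rw [hMc j, ← congrFun hts j]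
    have hαs : α s = lam i := hα1 s i hMci
    refine ⟨s, ⟨?_, hsT⟩, hMci.symm, hMc⟩
    rw [hS]
    exact (hαs ▸ hi : 0 < α s)
  -- columns of M equal to a tilde vector are not modified columns
  have hMtilde : ∀ i s, (fun j => M j i) = tilde s → ¬(lam i = 0 ∧ Q ⟨n, by omega⟩ i = 0) := by
    intro i s he hc
    have h1 : M ⟨n + 1, by omega⟩ i = 1 := by rw [congrFun he ⟨n + 1, by omega⟩, tilde_q]
    rw [hM, if_pos hc] at h1
    have := hQrow2 i; have := hQrow2 ℓ
    linarith
  -- conclusion (7)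
  have c7 : ∀ i, M ⟨n, by omega⟩ i = 0 → ∃ s ∈ S, tilde s = fun j => M j i := by
    intro i h
    have hnc : ¬(lam i = 0 ∧ Q ⟨n, by omega⟩ i = 0) := by
      intro hc
      rw [hM, if_pos hc, hc.2, zero_add] at h
      exact hℓ h
    have hQpi : Q ⟨n, by omega⟩ i = 0 := by rw [← hMQcol i hnc]; exact h
    have hlne : lam i ≠ 0 := fun h' => hnc ⟨h', hQpi⟩
    have hlpos : 0 < lam i := lt_of_le_of_ne (hlamnn i) (Ne.symm hlne)
    obtain ⟨s, hsST, hts, _⟩ := c5 i hlpos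
    exact ⟨s, hsST.1, hts⟩
  -- conclusion (8)
  have c8 : ∀ s ∈ S, ∃ i, (fun j => M j i) = tilde s := by
    intro s hs
    by_contra h
    push_neg at h
    have := hα0 s h
    rw [hS, Set.mem_setOf_eq] at hs
    exact (ne_of_gt hs) this
  -- S ⊆ T
  have hST : S ⊆ T := by
    intro s hs
    obtain ⟨i, hi⟩ := c8 s hs
    have hnc := hMtilde i s hi
    have hMc := hMQcol i hnc
    have hQc : (fun j => Q j i) = tilde s := by
      funext j; rw [← hMc j]; exact congrFun hi j
    have hαs := hα1 s i hi
    have hlpos : 0 < lam i := by rw [← hαs]; rw [hS, Set.mem_setOf_eq] at hs; exact hs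
    obtain ⟨t, htT, htt⟩ := hQcolpos i hlpos
    have hts : t = s := tilde_inj (htt.trans hQc)
    exact hts ▸ htT
  have hSfin : S.Finite := hTfin.subset hST
  -- conclusion (9): cardinality
  have hcard : S.ncard ≤ n + 1 := by
    have hiOf : ∀ s, s ∈ hSfin.toFinset → ∃ i, (fun j => M j i) = tilde s :=
      fun s hs => c8 s (hSfin.mem_toFinset.mp hs)
    set f : (Fin n → ℝ) → Fin (n + 2) :=
      fun s => if h : s ∈ S then (c8 s h).choose else ℓ with hf
    have hfs : ∀ s ∈ S, (fun j => M j (f s)) = tilde s := by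
      intro s hs
      rw [hf]
      simp only [dif_pos hs]
      exact (c8 s hs).choose_spec
    have hmaps : ∀ s ∈ hSfin.toFinset, f s ∈ Finset.univ.erase ℓ := by
      intro s hs
      have hs' := hSfin.mem_toFinset.mp hs
      refine Finset.mem_erase.mpr ⟨?_, Finset.mem_univ _⟩
      intro hfl
      have h1 : M ⟨n, by omega⟩ (f s) = 0 := by
        rw [congrFun (hfs s hs') ⟨n, by omega⟩, tilde_p]
      rw [hfl] at h1
      rw [hMQcol ℓ hcondℓ _] at h1
      exact hℓ h1
    have hinj : Set.InjOn f hSfin.toFinset := by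
      intro s₁ h₁ s₂ h₂ he
      have e1 := hfs s₁ (hSfin.mem_toFinset.mp h₁)
      have e2 := hfs s₂ (hSfin.mem_toFinset.mp h₂)
      rw [he] at e1
      exact tilde_inj (e1.symm.trans e2)
    have hle := Finset.card_le_card_of_injOn f hmaps hinj
    rw [Finset.card_erase_of_mem (Finset.mem_univ ℓ), Finset.card_univ,
      Fintype.card_fin] at hle
    rw [Set.ncard_eq_toFinset_card S hSfin]
    omega
  -- conclusion (6)
  have hQS : ∀ J, ∑ i, lam i * Q J i = ∑ s ∈ hSfin.toFinset, α s * tilde s J := by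
    intro J
    have h1 : ∑ i, lam i * Q J i =
        ∑ i ∈ Finset.univ.filter (fun i => 0 < lam i), lam i * Q J i := by
      refine (Finset.sum_filter_of_ne ?_).symm
      intro i _ hne
      refine lt_of_le_of_ne (hlamnn i) ?_
      intro h
      exact hne (by rw [← h, zero_mul])
    rw [h1]
    refine Finset.sum_bij'
      (fun i hi => (c5 i (Finset.mem_filter.mp hi).2).choose)
      (fun s hs => if h : s ∈ S then (c8 s h).choose else ℓ) ?_ ?_ ?_ ?_ ?_
    · intro i hi
      exact hSfin.mem_toFinset.mpr (c5 i (Finset.mem_filter.mp hi).2).choose_spec.1.1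
    · intro s hs
      have hs' := hSfin.mem_toFinset.mp hs
      simp only [dif_pos hs']
      have he := (c8 s hs').choose_spec
      have hα := hα1 s _ he
      refine Finset.mem_filter.mpr ⟨Finset.mem_univ _, ?_⟩
      rw [hS, Set.mem_setOf_eq] at hs'
      exact lt_of_lt_of_eq hs' hα
    · intro i hi
      have hspec := (c5 i (Finset.mem_filter.mp hi).2).choose_spec
      have hsS := hspec.1.1
      simp only [dif_pos hsS]
      have he := (c8 _ hsS).choose_spec
      exact hMcolinj _ _ (he.trans hspec.2.1)
    · intro s hs
      have hs' := hSfin.mem_toFinset.mp hs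
      simp only [dif_pos hs']
      have he := (c8 s hs').choose_spec
      set i := (c8 s hs').choose
      have hlpos : 0 < lam i := by
        have hα := hα1 s _ he
        rw [hS, Set.mem_setOf_eq] at hs'
        exact lt_of_lt_of_eq hs' hα
      exact tilde_inj ((c5 i hlpos).choose_spec.2.1.trans he)
    · intro i hi
      have hlpos := (Finset.mem_filter.mp hi).2
      have hspec := (c5 i hlpos).choose_spec
      have hα := hα1 _ i hspec.2.1.symm
      rw [hα, congrFun hspec.2.1 J, hspec.2.2 J]
  have c6 : (∑ᶠ s ∈ T, β s • s) = (∑ᶠ s ∈ S, α s • s) := by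
    have hTc : (∑ᶠ s ∈ T, β s • s) = ∑ s ∈ hTfin.toFinset, β s • s := by
      exact finsum_mem_eq_finite_toFinset_sum _ hTfin
    have hSc : (∑ᶠ s ∈ S, α s • s) = ∑ s ∈ hSfin.toFinset, α s • s := by
      exact finsum_mem_eq_finite_toFinset_sum _ hSfin
    rw [hTc, hSc]
    funext j
    rw [Finset.sum_apply, Finset.sum_apply]
    simp only [Pi.smul_apply, smul_eq_mul]
    have hTj : ∀ s : Fin n → ℝ, s j = tilde s (j.castSucc.castSucc) := by
      intro s; simp [tilde]
    calc ∑ s ∈ hTfin.toFinset, β s * s j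
        = ∑ s ∈ hTfin.toFinset, β s * tilde s (j.castSucc.castSucc) := by
          exact Finset.sum_congr rfl (fun s _ => by rw [hTj s])
      _ = ∑ i, lam i * Q (j.castSucc.castSucc) i := hsum _
      _ = ∑ s ∈ hSfin.toFinset, α s * tilde s (j.castSucc.castSucc) := hQS _
      _ = ∑ s ∈ hSfin.toFinset, α s * s j := by
          exact Finset.sum_congr rfl (fun s _ => by rw [hTj s])
  exact ⟨c0, ⟨hMdet, hMrow1, hMrow2⟩, c5, c6, c7, c8, hST, hSfin, hcard⟩
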